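/- Let U ⊆ ℝ³ be open, let n : U → ℝ³ be differentiable with |n(x)| = 1 for all x ∈ U, let φ : U → ℝ³ be differentiable, and define Q : U → 𝒬₀ by Q(x) = s₊(n(x)⊗n(x) − Id/3). Then at every point of U, Σ_k ∂_k Q : ∂_k(n⊗φ + φ⊗n) = 2 s₊ ( |∇n|² (n·φ) + Σ_k ∂_k n · ∂_k φ ), where |∇n|² = Σ_{k,i} (∂_k n_i)². -/

import Mathlib

open Matrix Finset

noncomputable section

abbrev Mat := Matrix (Fin 3) (Fin 3) ℝ
abbrev Vec3 := Fin 3 → ℝ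

/-- Spatial partial derivative `∂_k f`. -/
def pd (k : Fin 3) (f : Vec3 → ℝ) : Vec3 → ℝ := fun x => fderiv ℝ f x (Pi.single k 1)

lemma pd_congr {f g : Vec3 → ℝ} (h : f = g) (k : Fin 3) (x : Vec3) :
    pd k f x = pd k g x := by rw [h]

lemma pd_mul {f g : Vec3 → ℝ} {x : Vec3} (hf : DifferentiableAt ℝ f x)
    (hg : DifferentiableAt ℝ g x) (k : Fin 3) :
    pd k (fun y => f y * g y) x = pd k f x * g x + f x * pd k g x := by
  simp only [pd, fderiv_fun_mul hf hg, ContinuousLinearMap.add_apply,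
    ContinuousLinearMap.smul_apply, smul_eq_mul]
  ring

lemma pd_Q {f g : Vec3 → ℝ} {x : Vec3} (hf : DifferentiableAt ℝ f x)
    (hg : DifferentiableAt ℝ g x) (s c : ℝ) (k : Fin 3) :
    pd k (fun y => s * (f y * g y - c)) x
      = s * (pd k f x * g x + f x * pd k g x) := by
  have h1 : DifferentiableAt ℝ (fun y => f y * g y) x := hf.mul hg
  simp only [pd]
  rw [fderiv_const_mul (h1.sub_const c), fderiv_sub_const, fderiv_fun_mul hf hg]
  simp only [ContinuousLinearMap.smul_apply, ContinuousLinearMap.add_apply, smul_eq_mul]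
  ring

lemma pd_add {f g : Vec3 → ℝ} {x : Vec3} (hf : DifferentiableAt ℝ f x)
    (hg : DifferentiableAt ℝ g x) (k : Fin 3) :
    pd k (fun y => f y + g y) x = pd k f x + pd k g x := by
  simp only [pd]
  rw [fderiv_fun_add hf hg]
  simp

/-- For a differentiable unit vector field `n`, a differentiable vector field `φ`
on an open `U ⊆ ℝ³`, and `Q = s₊(n⊗n − Id/3)`:
`Σ_k ∂_kQ : ∂_k(n⊗φ + φ⊗n) = 2 s₊ (|∇n|² (n·φ) + Σ_k ∂_k n · ∂_k φ)` on `U`. -/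
theorem gradQ_contract_grad_nphi
    (s : ℝ) (hs : 0 < s)
    (U : Set Vec3) (hU : IsOpen U)
    (n : Vec3 → Vec3) (φ : Vec3 → Vec3)
    (hn : ∀ x ∈ U, DifferentiableAt ℝ n x)
    (hφ : ∀ x ∈ U, DifferentiableAt ℝ φ x)
    (hunit : ∀ x ∈ U, n x ⬝ᵥ n x = 1) :
    ∀ x ∈ U,
      (∑ k : Fin 3, ∑ i : Fin 3, ∑ j : Fin 3,
          pd k (fun y => (s • (vecMulVec (n y) (n y) - (1 / 3 : ℝ) • (1 : Mat))) i j) x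
            * pd k (fun y => (vecMulVec (n y) (φ y) + vecMulVec (φ y) (n y)) i j) x)
        = 2 * s *
            ((∑ k : Fin 3, ∑ i : Fin 3, pd k (fun y => n y i) x ^ 2) * (n x ⬝ᵥ φ x)
              + ∑ k : Fin 3, ∑ i : Fin 3,
                  pd k (fun y => n y i) x * pd k (fun y => φ y i) x) := by
  intro x hx
  have hnd := hn x hx
  have hφd := hφ x hx
  have hni : ∀ i, DifferentiableAt ℝ (fun y => n y i) x :=
    fun i => (differentiableAt_pi.mp hnd) i
  have hφi : ∀ i, DifferentiableAt ℝ (fun y => φ y i) x :=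
    fun i => (differentiableAt_pi.mp hφd) i
  set a : Fin 3 → ℝ := fun i => n x i with ha
  set b : Fin 3 → ℝ := fun i => φ x i with hb
  set A : Fin 3 → Fin 3 → ℝ := fun k i => pd k (fun y => n y i) x with hA
  set B : Fin 3 → Fin 3 → ℝ := fun k i => pd k (fun y => φ y i) x with hB
  -- derivative of the Q-part
  have key1 : ∀ k i j : Fin 3,
      pd k (fun y => (s • (vecMulVec (n y) (n y) - (1 / 3 : ℝ) • (1 : Mat))) i j) x
        = s * (A k i * a j + a i * A k j) := by
    intro k i j
    have heq : (fun y => (s • (vecMulVec (n y) (n y) - (1 / 3 : ℝ) • (1 : Mat))) i j)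
        = fun y => s * ((fun z => n z i) y * (fun z => n z j) y
            - (1 / 3 : ℝ) * (1 : Mat) i j) := by
      funext y
      simp [vecMulVec_apply, Matrix.smul_apply, Matrix.sub_apply, smul_eq_mul]
    rw [pd_congr heq, pd_Q (hni i) (hni j)]
  -- derivative of the symmetric part
  have key2 : ∀ k i j : Fin 3,
      pd k (fun y => (vecMulVec (n y) (φ y) + vecMulVec (φ y) (n y)) i j) x
        = (A k i * b j + a i * B k j) + (B k i * a j + b i * A k j) := by
    intro k i j
    have heq : (fun y => (vecMulVec (n y) (φ y) + vecMulVec (φ y) (n y)) i j)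
        = fun y => (fun z => (fun w => n w i) z * (fun w => φ w j) z) y
            + (fun z => (fun w => φ w i) z * (fun w => n w j) z) y := by
      funext y
      simp [vecMulVec_apply, Matrix.add_apply]
    rw [pd_congr heq, pd_add ((hni i).fun_mul (hφi j)) ((hφi i).fun_mul (hni j)),
      pd_mul (hni i) (hφi j), pd_mul (hφi i) (hni j)]
  -- the unit-norm constraint
  have hsq : a 0 * a 0 + a 1 * a 1 + a 2 * a 2 = 1 := by
    have := hunit x hx
    simpa [dotProduct, Fin.sum_univ_three, ha] using this
  have hc : ∀ k : Fin 3, a 0 * A k 0 + a 1 * A k 1 + a 2 * A k 2 = 0 := by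
    intro k
    have hdsum : DifferentiableAt ℝ (fun y => ∑ i : Fin 3, n y i * n y i) x := by
      apply DifferentiableAt.fun_sum
      intro i _
      exact (hni i).mul (hni i)
    have hev : (fun y => ∑ i : Fin 3, n y i * n y i) =ᶠ[nhds x] fun _ => 1 := by
      filter_upwards [hU.mem_nhds hx] with y hy
      have := hunit y hy
      simpa [dotProduct] using this
    have hz : fderiv ℝ (fun y => ∑ i : Fin 3, n y i * n y i) x = 0 := by
      rw [hev.fderiv_eq]
      exact fderiv_const_apply 1
    have h2 : pd k (fun y => ∑ i : Fin 3, n y i * n y i) x = 0 := by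
      simp [pd, hz]
    have h3 : pd k (fun y => ∑ i : Fin 3, n y i * n y i) x
        = ∑ i : Fin 3, (A k i * a i + a i * A k i) := by
      have heq : (fun y => ∑ i : Fin 3, n y i * n y i)
          = fun y => (fun z => (fun w => n w 0) z * (fun w => n w 0) z) y
              + ((fun z => (fun w => n w 1) z * (fun w => n w 1) z) y
                + (fun z => (fun w => n w 2) z * (fun w => n w 2) z) y) := by
        funext y; simp [Fin.sum_univ_three]; ring
      rw [pd_congr heq,
        pd_add ((hni 0).fun_mul (hni 0)) (((hni 1).fun_mul (hni 1)).fun_add ((hni 2).fun_mul (hni 2))),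
        pd_add ((hni 1).fun_mul (hni 1)) ((hni 2).fun_mul (hni 2)),
        pd_mul (hni 0) (hni 0), pd_mul (hni 1) (hni 1), pd_mul (hni 2) (hni 2)]
      simp [Fin.sum_univ_three]
      ring
    rw [h3, Fin.sum_univ_three] at h2
    linarith [h2]
  -- rewrite everything and finish by linear algebra
  simp only [key1, key2]
  have hdot : n x ⬝ᵥ φ x = a 0 * b 0 + a 1 * b 1 + a 2 * b 2 := by
    simp [dotProduct, Fin.sum_univ_three, ha, hb]
  rw [hdot]
  simp only [Fin.sum_univ_three]
  have hc0 := hc 0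
  have hc1 := hc 1
  have hc2 := hc 2
  linear_combination
    (2 * s * (A 0 0 * B 0 0 + A 0 1 * B 0 1 + A 0 2 * B 0 2
      + A 1 0 * B 1 0 + A 1 1 * B 1 1 + A 1 2 * B 1 2
      + A 2 0 * B 2 0 + A 2 1 * B 2 1 + A 2 2 * B 2 2)) * hsq
    + (2 * s * ((a 0 * B 0 0 + a 1 * B 0 1 + a 2 * B 0 2)
        + (b 0 * A 0 0 + b 1 * A 0 1 + b 2 * A 0 2))) * hc0
    + (2 * s * ((a 0 * B 1 0 + a 1 * B 1 1 + a 2 * B 1 2)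
        + (b 0 * A 1 0 + b 1 * A 1 1 + b 2 * A 1 2))) * hc1
    + (2 * s * ((a 0 * B 2 0 + a 1 * B 2 1 + a 2 * B 2 2)
        + (b 0 * A 2 0 + b 1 * A 2 1 + b 2 * A 2 2))) * hc2
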